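/- For the function Θ(t,x,y) = exp((1 - cosh(2t))(x²+y²)/(2 sinh(2t))), there exists c > 0 such that 0 < Θ(t,x,y) ≤ exp(-c t (x²+y²)) for all 0 < t ≤ 1 and x, y > 0, and there exists c' > 0 with 0 < Θ(t,x,y) ≤ exp(-c'(x²+y²)) for all t ≥ 1 and x, y > 0. -/

import Mathlib

open Real Set

noncomputable def Θ (t x y : ℝ) : ℝ :=
  Real.exp ((1 - Real.cosh (2*t)) * (x^2 + y^2) / (2 * Real.sinh (2*t)))

lemma theta_eq (t S : ℝ) (ht : 0 < t) :
    (1 - Real.cosh (2*t)) * S / (2 * Real.sinh (2*t))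
      = -(Real.sinh t * S) / (2 * Real.cosh t) := by
  have hc : 0 < Real.cosh t := Real.cosh_pos t
  have hs : 0 < Real.sinh t := Real.sinh_pos_iff.2 ht
  have h3 : Real.cosh t ^ 2 - Real.sinh t ^ 2 = 1 := Real.cosh_sq_sub_sinh_sq t
  rw [Real.sinh_two_mul, Real.cosh_two_mul]
  field_simp
  linear_combination (-S) * h3

theorem theta_bounds :
    (∃ c : ℝ, 0 < c ∧ ∀ t x y : ℝ, 0 < t → t ≤ 1 → 0 < x → 0 < y →
      0 < Θ t x y ∧ Θ t x y ≤ Real.exp (-c * t * (x^2 + y^2))) ∧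
    (∃ c' : ℝ, 0 < c' ∧ ∀ t x y : ℝ, 1 ≤ t → 0 < x → 0 < y →
      0 < Θ t x y ∧ Θ t x y ≤ Real.exp (-c' * (x^2 + y^2))) := by
  constructor
  · refine ⟨1/4, by norm_num, fun t x y ht ht1 hx hy => ⟨Real.exp_pos _, ?_⟩⟩
    unfold Θ
    rw [theta_eq _ _ ht]
    apply Real.exp_le_exp.2
    have hc : 0 < Real.cosh t := Real.cosh_pos t
    have hs : t ≤ Real.sinh t := Real.self_le_sinh_iff.2 ht.le
    have hsp : 0 < Real.sinh t := Real.sinh_pos_iff.2 ht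
    have hS : (0:ℝ) < x^2 + y^2 := by positivity
    have hc2 : Real.cosh t ≤ 2 := by
      have h0 : Real.cosh t ≤ Real.cosh 1 :=
        Real.cosh_le_cosh.2 (by rw [abs_of_pos ht, abs_one]; exact ht1)
      have h1 : Real.cosh 1 = (Real.exp 1 + Real.exp (-1)) / 2 := Real.cosh_eq 1
      have he : Real.exp 1 < 2.7182818286 := Real.exp_one_lt_d9
      have he' : Real.exp (-1) ≤ 1 := by
        rw [Real.exp_le_one_iff]; norm_num
      nlinarith
    have h5 : t * Real.cosh t ≤ Real.sinh t * 2 :=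
      mul_le_mul hs hc2 hc.le hsp.le
    have h6 : t * Real.cosh t * (x^2+y^2) ≤ Real.sinh t * 2 * (x^2+y^2) :=
      mul_le_mul_of_nonneg_right h5 hS.le
    have h7 : -(Real.sinh t * (x^2+y^2)) / (2 * Real.cosh t) ≤ -(1/4) * t * (x^2+y^2) := by
      rw [neg_div, neg_mul, neg_mul, neg_le_neg_iff, le_div_iff₀ (by positivity)]
      nlinarith
    linarith
  · refine ⟨1/4, by norm_num, fun t x y ht hx hy => ⟨Real.exp_pos _, ?_⟩⟩
    unfold Θ
    have ht0 : 0 < t := lt_of_lt_of_le one_pos ht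
    rw [theta_eq _ _ ht0]
    apply Real.exp_le_exp.2
    have hc : 0 < Real.cosh t := Real.cosh_pos t
    have hS : (0:ℝ) < x^2 + y^2 := by positivity
    have key : Real.cosh t ≤ 2 * Real.sinh t := by
      rw [Real.cosh_eq, Real.sinh_eq]
      have h1 : 2 ≤ Real.exp t := by
        calc (2:ℝ) = 1 + 1 := by norm_num
        _ ≤ Real.exp 1 := Real.add_one_le_exp 1
        _ ≤ Real.exp t := Real.exp_le_exp.2 ht
      have h2 : 0 < Real.exp (-t) := Real.exp_pos _
      have h3 : Real.exp (-t) * Real.exp t = 1 := by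
        rw [← Real.exp_add]; simp
      nlinarith
    have h6 : Real.cosh t * (x^2+y^2) ≤ 2 * Real.sinh t * (x^2+y^2) :=
      mul_le_mul_of_nonneg_right key hS.le
    have h7 : -(Real.sinh t * (x^2+y^2)) / (2 * Real.cosh t) ≤ -(1/4) * (x^2+y^2) := by
      rw [neg_div, neg_mul, neg_le_neg_iff, le_div_iff₀ (by positivity)]
      nlinarith
    linarith
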